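/- If the family S(Φ) is evolutionary, then the formula Φ is satisfiable. Moreover, given any evolutionary ordering of S(Φ), the truth assignment that sets x_i to true if and only if L_i appears before V_i in the ordering satisfies Φ. -/

import Mathlib

/-- The universe `U` of the reduction: `6n + 5m` elements. `assign i true` is the
assignment element `xᵢ` and `assign i false` is `x̄ᵢ`; `tau` is the trigger element `τ`
and `trig i b` are the trigger elements `tᵢ, t̄ᵢ`; `free i b` are the free elements
`fᵢ, f̄ᵢ`; `lit i b h` are the literal elements `ℓᵢʰ, ℓ̄ᵢʰ`; `cl j` and `cl' j` are the
clause elements `cⱼ` and `cⱼ'`. -/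
inductive Elem (n m k : ℕ) : Type where
  | assign : Fin n → Bool → Elem n m k
  | tau    : Elem n m k
  | trig   : Fin n → Bool → Elem n m k
  | free   : Fin n → Bool → Elem n m k
  | lit    : Fin n → Bool → Fin k → Elem n m k
  | cl     : Fin m → Elem n m k
  | cl'    : Fin m → Elem n m k

/-- Index type for the sets of the family `S(Φ)`: the triggering sets `T` and `T'`, the
variable sets `L i true = Lᵢ` and `L i false = L̄ᵢ`, the verification sets `V i = Vᵢ`,
and the clause sets `C j = Cⱼ` and `C' j = Cⱼ'`. -/
inductive SetIdx (n m : ℕ) : Type where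
  | T  : SetIdx n m
  | T' : SetIdx n m
  | L  : Fin n → Bool → SetIdx n m
  | V  : Fin n → SetIdx n m
  | C  : Fin m → SetIdx n m
  | C' : Fin m → SetIdx n m

/-- The family `S(Φ)` built from a 3-CNF formula `Φ` with `n` variables and `m` clauses,
where `clause j s` is the `s`-th literal of the `j`-th clause (a variable together with a
polarity) and `occ j s` is its occurrence number among the `k` occurrences of that
literal. `T = {τ}`, `T' = {τ, t₁, t̄₁, …, tₙ, t̄ₙ}`,
`L i b = {xᵢ, tᵢ, fᵢ, ℓᵢ¹, …, ℓᵢᵏ}` (barred version for `b = false`),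
`V i = {xᵢ, x̄ᵢ, c₁, c₁', …, c_m, c_m'}`, `C j = {e₁, e₂, e₃, cⱼ}` where `e₁, e₂, e₃`
are the literal elements of the occurrences in clause `j`, and `C' j = {cⱼ, cⱼ'}`. -/
def fam (n m k : ℕ) (clause : Fin m → Fin 3 → Fin n × Bool)
    (occ : Fin m → Fin 3 → Fin k) : SetIdx n m → Set (Elem n m k)
  | .T      => {Elem.tau}
  | .T'     => {e | e = Elem.tau ∨ ∃ i b, e = Elem.trig i b}
  | .L i b  => {e | e = Elem.assign i b ∨ e = Elem.trig i b ∨ e = Elem.free i b ∨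
                    ∃ h, e = Elem.lit i b h}
  | .V i    => {e | e = Elem.assign i true ∨ e = Elem.assign i false ∨
                    (∃ j, e = Elem.cl j) ∨ (∃ j, e = Elem.cl' j)}
  | .C j    => {e | (∃ s : Fin 3, e = Elem.lit (clause j s).1 (clause j s).2 (occ j s)) ∨
                    e = Elem.cl j}
  | .C' j   => {e | e = Elem.cl j ∨ e = Elem.cl' j}

/-- `pos` describes an evolutionary ordering of the family `S : ι → Set U`: it is an
injective position function (so it linearly orders the sets of the family), each set
brings a new element (it is not contained in the union of the sets placed before it), and
each set except the first (i.e. each set having some set before it) has an old element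
(it intersects the union of the sets placed before it). -/
def IsEvolOrdering {U ι : Type*} (S : ι → Set U) (pos : ι → ℕ) : Prop :=
  Function.Injective pos ∧
  (∀ a : ι, ¬ S a ⊆ ⋃ b ∈ {b : ι | pos b < pos a}, S b) ∧
  (∀ a : ι, (∃ b : ι, pos b < pos a) →
    (S a ∩ ⋃ b ∈ {b : ι | pos b < pos a}, S b).Nonempty)

/-- If the family `S(Φ)` is evolutionary, then `Φ` is satisfiable; moreover, given any
evolutionary ordering `pos` of `S(Φ)`, the assignment setting `xᵢ` to true if and only
if `Lᵢ` appears before `Vᵢ` satisfies `Φ`. -/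
theorem satisfiable_of_evolutionary (n m k : ℕ)
    (clause : Fin m → Fin 3 → Fin n × Bool) (occ : Fin m → Fin 3 → Fin k)
    (hocc : ∀ j s j' s', clause j s = clause j' s' → occ j s = occ j' s' →
      (j, s) = (j', s'))
    (hcount : ∀ (i : Fin n) (b : Bool),
      (Finset.univ.filter fun p : Fin m × Fin 3 => clause p.1 p.2 = (i, b)).card = k)
    (hdup : ∀ j : Fin m, ∃ j' : Fin m, j' ≠ j ∧ ∀ s, clause j' s = clause j s)
    (h3m : 2 * k * n = 3 * m)
    (pos : SetIdx n m → ℕ)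
    (hev : IsEvolOrdering (fam n m k clause occ) pos) :
    (∃ a : Fin n → Bool, ∀ j : Fin m, ∃ s : Fin 3, a (clause j s).1 = (clause j s).2) ∧
    (∀ j : Fin m, ∃ s : Fin 3,
      decide (pos (SetIdx.L (clause j s).1 true) < pos (SetIdx.V (clause j s).1))
        = (clause j s).2) := by
  obtain ⟨hinj, hnew, hold⟩ := hev
  -- `T` is the first set of the ordering.
  have hfirst : ∀ b : SetIdx n m, b ≠ SetIdx.T → pos SetIdx.T < pos b := by
    have hTT' : ¬ pos SetIdx.T' < pos SetIdx.T := by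
      intro h
      apply hnew SetIdx.T
      intro e he
      have he' : e = Elem.tau := he
      subst he'
      exact Set.mem_biUnion h (by simp [fam])
    have hnb : ∀ b : SetIdx n m, ¬ pos b < pos SetIdx.T := by
      intro b hb
      obtain ⟨e, heT, heU⟩ := hold SetIdx.T ⟨b, hb⟩
      have he' : e = Elem.tau := heT
      subst he'
      simp only [Set.mem_iUnion, Set.mem_setOf_eq] at heU
      obtain ⟨c, hc, hce⟩ := heU
      cases c with
      | T => exact lt_irrefl _ hc
      | T' => exact hTT' hc
      | L i b => simp [fam] at hce
      | V i => simp [fam] at hce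
      | C j => simp [fam] at hce
      | C' j => simp [fam] at hce
    intro b hb
    exact lt_of_le_of_ne (not_lt.1 (hnb b)) (fun h => hb (hinj h.symm))
  -- every `C' j` precedes every `V i`
  have hC'V : ∀ (j : Fin m) (i : Fin n), pos (SetIdx.C' j) < pos (SetIdx.V i) := by
    intro j i
    by_contra h
    have hlt : pos (SetIdx.V i) < pos (SetIdx.C' j) :=
      lt_of_le_of_ne (not_lt.1 h) (fun h' => by simpa using hinj h')
    apply hnew (SetIdx.C' j)
    intro e he
    simp only [fam, Set.mem_setOf_eq] at he
    rcases he with he | he <;> subst he <;>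
      exact Set.mem_biUnion hlt (by simp [fam])
  -- every `C j` precedes `C' j`
  have hCC' : ∀ j : Fin m, pos (SetIdx.C j) < pos (SetIdx.C' j) := by
    intro j
    obtain ⟨e, heC, heU⟩ := hold (SetIdx.C' j) ⟨SetIdx.T, hfirst _ (by simp)⟩
    simp only [fam, Set.mem_setOf_eq] at heC
    simp only [Set.mem_iUnion, Set.mem_setOf_eq] at heU
    obtain ⟨c, hc, hce⟩ := heU
    cases c with
    | T => rcases heC with h | h <;> subst h <;> simp [fam] at hce
    | T' => rcases heC with h | h <;> subst h <;> simp [fam] at hce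
    | L i b => rcases heC with h | h <;> subst h <;> simp [fam] at hce
    | V i => exact absurd hc (not_lt.2 (le_of_lt (hC'V j i)))
    | C j' =>
      rcases heC with h | h <;> subst h <;> simp [fam] at hce
      · obtain rfl : j = j' := hce
        exact hc
    | C' j' =>
      rcases heC with h | h <;> subst h <;> simp [fam] at hce <;>
        · obtain rfl : j = j' := hce
          exact absurd hc (lt_irrefl _)
  -- the key step: from the old element of `C j`, some literal's `L` set precedes
  -- the corresponding `V` set
  have hmain : ∀ j : Fin m, ∃ s : Fin 3,
      pos (SetIdx.L (clause j s).1 (clause j s).2) < pos (SetIdx.V (clause j s).1) := by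
    intro j
    obtain ⟨e, heC, heU⟩ := hold (SetIdx.C j) ⟨SetIdx.T, hfirst _ (by simp)⟩
    simp only [fam, Set.mem_setOf_eq] at heC
    simp only [Set.mem_iUnion, Set.mem_setOf_eq] at heU
    obtain ⟨c, hc, hce⟩ := heU
    rcases heC with ⟨s, hs⟩ | h
    · subst hs
      refine ⟨s, ?_⟩
      cases c with
      | T => simp [fam] at hce
      | T' => simp [fam] at hce
      | L i b =>
        simp only [fam, Set.mem_setOf_eq] at hce
        rcases hce with h | h | h | ⟨h', h⟩ <;>
          first
          | (exfalso; cases h; done)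
          | (injection h with h1 h2 h3
             calc pos (SetIdx.L (clause j s).1 (clause j s).2)
                 = pos (SetIdx.L i b) := by rw [h1, h2]
               _ < pos (SetIdx.C j) := hc
               _ < pos (SetIdx.C' j) := hCC' j
               _ < pos (SetIdx.V (clause j s).1) := hC'V j _)
      | V i => simp [fam] at hce
      | C j' =>
        exfalso
        simp only [fam, Set.mem_setOf_eq] at hce
        rcases hce with ⟨s', hs'⟩ | h
        · injection hs' with h1 h2 h3
          have hcl : clause j s = clause j' s' := Prod.ext h1 h2
          have := hocc j s j' s' hcl h3
          have hjj : j = j' := (Prod.mk.injEq _ _ _ _ ▸ this).1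
          subst hjj
          exact lt_irrefl _ hc
        · exact absurd h (by simp)
      | C' j' => simp [fam] at hce
    · subst h
      exfalso
      cases c with
      | T => simp [fam] at hce
      | T' => simp [fam] at hce
      | L i b => simp [fam] at hce
      | V i =>
        exact absurd hc (not_lt.2 (le_of_lt (lt_trans (hCC' j) (hC'V j i))))
      | C j' =>
        simp [fam] at hce
        obtain rfl : j = j' := hce
        exact lt_irrefl _ hc
      | C' j' =>
        simp [fam] at hce
        obtain rfl : j = j' := hce
        exact absurd hc (not_lt.2 (le_of_lt (hCC' j)))
  -- the new element of `V i` is an assignment element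
  have hV : ∀ i : Fin n, ∃ b : Bool, ¬ pos (SetIdx.L i b) < pos (SetIdx.V i) := by
    intro i
    have h := hnew (SetIdx.V i)
    rw [Set.not_subset] at h
    obtain ⟨e, heV, heU⟩ := h
    simp only [fam, Set.mem_setOf_eq] at heV
    rcases heV with h | h | ⟨j, h⟩ | ⟨j, h⟩
    · subst h
      exact ⟨true, fun hlt => heU (Set.mem_biUnion hlt (by simp [fam]))⟩
    · subst h
      exact ⟨false, fun hlt => heU (Set.mem_biUnion hlt (by simp [fam]))⟩
    · subst h
      exact absurd (Set.mem_biUnion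
        (show SetIdx.C j ∈ {b : SetIdx n m | pos b < pos (SetIdx.V i)} from
          lt_trans (hCC' j) (hC'V j i))
        (show Elem.cl j ∈ fam n m k clause occ (SetIdx.C j) by simp [fam])) heU
    · subst h
      exact absurd (Set.mem_biUnion
        (show SetIdx.C' j ∈ {b : SetIdx n m | pos b < pos (SetIdx.V i)} from hC'V j i)
        (show Elem.cl' j ∈ fam n m k clause occ (SetIdx.C' j) by simp [fam])) heU
  -- assemble the conclusion
  have hkey : ∀ j : Fin m, ∃ s : Fin 3,
      decide (pos (SetIdx.L (clause j s).1 true) < pos (SetIdx.V (clause j s).1))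
        = (clause j s).2 := by
    intro j
    obtain ⟨s, hs⟩ := hmain j
    refine ⟨s, ?_⟩
    obtain ⟨b, hb⟩ := hV (clause j s).1
    cases hbs : (clause j s).2 with
    | true =>
      rw [hbs] at hs
      simpa using hs
    | false =>
      rw [hbs] at hs
      have hbtrue : b = true := by
        cases b with
        | false => exact absurd hs hb
        | true => rfl
      subst hbtrue
      simpa using hb
  exact ⟨⟨fun i => decide (pos (SetIdx.L i true) < pos (SetIdx.V i)),
    fun j => hkey j⟩, hkey⟩
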